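/- Let G be a graph with maximum degree at most Δ, let p ≥ 0 be real, and let c ≥ Δ+1. Suppose f is a partial proper c-colouring of G such that for every vertex v that is not contained in a clique of size at least Δ+1−p/2, the number of f-coloured neighbours w of v whose colour appears on no other neighbour of v, minus the number of uncoloured neighbours of v, is at least deg(v)−p. Then G has a proper c-colouring in which every vertex v has at most p neighbours whose colour is repeated on another neighbour of v (i.e., a p-peaceful c-colouring). -/

import Mathlib

open Finset

lemma extend_aux {V : Type} [Fintype V] [DecidableEq V] (G : SimpleGraph V)
    [DecidableRel G.Adj] (Δ c : ℕ)
    (hdeg : ∀ v, G.degree v ≤ Δ) (hc : Δ + 1 ≤ c) :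
    ∀ (n : ℕ) (f : V → Option (Fin c)),
      (Finset.univ.filter (fun v => f v = none)).card = n →
      (∀ u v, G.Adj u v → (f u).isSome → f u ≠ f v) →
      ∃ g : V → Fin c, (∀ u v, G.Adj u v → g u ≠ g v) ∧ ∀ v a, f v = some a → g v = a := by
  intro n
  induction n with
  | zero =>
    intro f hcard hproper
    have hall : ∀ v, (f v).isSome := by
      intro v
      by_contra hv
      have h1 : f v = none := by cases h : f v <;> simp [h] at hv ⊢
      have h2 : v ∈ Finset.univ.filter (fun v => f v = none) := by simp [h1]
      rw [Finset.card_eq_zero] at hcard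
      simp [hcard] at h2
    refine ⟨fun v => (f v).get (hall v), ?_, ?_⟩
    · intro u v huv hne
      apply hproper u v huv (hall u)
      rw [← Option.some_get (hall u), ← Option.some_get (hall v)]
      exact congrArg _ hne
    · intro v a hva
      simp [hva]
  | succ n ih =>
    intro f hcard hproper
    have hne : (Finset.univ.filter (fun v => f v = none)).Nonempty := by
      rw [← Finset.card_pos, hcard]; omega
    obtain ⟨v0, hv0⟩ := hne
    have hfv0 : f v0 = none := (Finset.mem_filter.mp hv0).2
    have hex : ∃ a : Fin c, some a ∉ (G.neighborFinset v0).image f := by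
      by_contra hno
      push_neg at hno
      have hsub : (Finset.univ.image (fun a : Fin c => some a)) ⊆ (G.neighborFinset v0).image f := by
        intro x hx
        simp only [Finset.mem_image, Finset.mem_univ, true_and] at hx
        obtain ⟨a, ha⟩ := hx
        rw [← ha]; exact hno a
      have h1 : c ≤ ((G.neighborFinset v0).image f).card := by
        calc c = (Finset.univ.image (fun a : Fin c => some a)).card := by
              rw [Finset.card_image_of_injective _ (Option.some_injective _)]
              simp
          _ ≤ _ := Finset.card_le_card hsub
      have h2 : ((G.neighborFinset v0).image f).card ≤ Δ :=
        le_trans Finset.card_image_le (hdeg v0)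
      omega
    obtain ⟨a, ha⟩ := hex
    set f' := Function.update f v0 (some a) with hf'
    have hf'v0 : f' v0 = some a := by simp [hf']
    have hf'ne : ∀ v, v ≠ v0 → f' v = f v := fun v hv => Function.update_of_ne hv _ _
    have hproper' : ∀ u v, G.Adj u v → (f' u).isSome → f' u ≠ f' v := by
      intro u v huv hsome
      by_cases hu : u = v0
      · rw [hu] at huv ⊢
        by_cases hv : v = v0
        · rw [hv] at huv; exact (G.irrefl huv).elim
        · rw [hf'v0, hf'ne v hv]
          intro heq
          exact ha (Finset.mem_image.mpr ⟨v, (G.mem_neighborFinset v0 v).mpr huv, heq.symm⟩)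
      · by_cases hv : v = v0
        · rw [hv] at huv ⊢
          rw [hf'ne u hu, hf'v0]
          intro heq
          exact ha (Finset.mem_image.mpr ⟨u, (G.mem_neighborFinset v0 u).mpr huv.symm, heq⟩)
        · rw [hf'ne u hu, hf'ne v hv]
          exact hproper u v huv (by rwa [hf'ne u hu] at hsome)
    have hcard' : (Finset.univ.filter (fun v => f' v = none)).card = n := by
      have heq : Finset.univ.filter (fun v => f' v = none)
          = (Finset.univ.filter (fun v => f v = none)).erase v0 := by
        ext x
        simp only [Finset.mem_filter, Finset.mem_erase, Finset.mem_univ, true_and]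
        constructor
        · intro hx
          have hxne : x ≠ v0 := by
            intro h; rw [h, hf'v0] at hx; exact absurd hx (by simp)
          exact ⟨hxne, by rwa [hf'ne x hxne] at hx⟩
        · rintro ⟨hxne, hx⟩; rwa [hf'ne x hxne]
      rw [heq, Finset.card_erase_of_mem hv0, hcard]
      omega
    obtain ⟨g, hg1, hg2⟩ := ih f' hcard' hproper'
    refine ⟨g, hg1, ?_⟩
    intro v b hvb
    have hvne : v ≠ v0 := by
      intro h; rw [h, hfv0] at hvb; exact absurd hvb (by simp)
    exact hg2 v b (by rwa [hf'ne v hvne])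

lemma fiber_bound {α β : Type*} [DecidableEq α] [DecidableEq β] (N : Finset α) (g : α → β) :
    (N.filter (fun w => ∃ u ∈ N, u ≠ w ∧ g u = g w)).card + 2 * (N.image g).card ≤ 2 * N.card := by
  set D := N.filter (fun w => ∃ u ∈ N, u ≠ w ∧ g u = g w) with hD
  have hDsub : D ⊆ N := Finset.filter_subset _ _
  have hDcard : D.card = ∑ a ∈ N.image g, (D.filter (fun w => g w = a)).card :=
    Finset.card_eq_sum_card_fiberwise (fun x hx => Finset.mem_image_of_mem g (hDsub hx))
  have hNcard : N.card = ∑ a ∈ N.image g, (N.filter (fun w => g w = a)).card :=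
    Finset.card_eq_sum_card_fiberwise (fun x hx => Finset.mem_image_of_mem g hx)
  have key : ∀ a ∈ N.image g,
      (D.filter (fun w => g w = a)).card + 2 ≤ 2 * (N.filter (fun w => g w = a)).card := by
    intro a haim
    set m := (N.filter (fun w => g w = a)).card with hm
    have hsub2 : D.filter (fun w => g w = a) ⊆ N.filter (fun w => g w = a) :=
      Finset.filter_subset_filter _ hDsub
    have hm1 : 1 ≤ m := by
      obtain ⟨x, hx, hgx⟩ := Finset.mem_image.mp haim
      exact Finset.card_pos.mpr ⟨x, Finset.mem_filter.mpr ⟨hx, hgx⟩⟩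
    rcases Nat.lt_or_ge m 2 with hm2 | hm2
    · have : D.filter (fun w => g w = a) = ∅ := by
        rw [Finset.eq_empty_iff_forall_notMem]
        intro w hw
        obtain ⟨hwD, hgw⟩ := Finset.mem_filter.mp hw
        obtain ⟨hwN, u, huN, hune, hgu⟩ := Finset.mem_filter.mp hwD
        have hu' : u ∈ N.filter (fun w => g w = a) :=
          Finset.mem_filter.mpr ⟨huN, hgu.trans hgw⟩
        have hw' : w ∈ N.filter (fun w => g w = a) := Finset.mem_filter.mpr ⟨hwN, hgw⟩
        have : 2 ≤ m := by
          rw [hm]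
          exact Finset.one_lt_card.mpr ⟨u, hu', w, hw', hune⟩
        omega
      rw [this]
      simp; omega
    · have := Finset.card_le_card hsub2
      omega
  calc D.card + 2 * (N.image g).card
      = ∑ a ∈ N.image g, ((D.filter (fun w => g w = a)).card + 2) := by
        rw [Finset.sum_add_distrib, ← hDcard, Finset.sum_const, smul_eq_mul]
        ring
    _ ≤ ∑ a ∈ N.image g, 2 * (N.filter (fun w => g w = a)).card :=
        Finset.sum_le_sum key
    _ = 2 * N.card := by rw [← Finset.mul_sum, ← hNcard]

/-- Greedy completion of a partial colouring to a peaceful colouring. -/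
theorem stmt0 (V : Type) [Fintype V] [DecidableEq V] (G : SimpleGraph V)
    (Δ c : ℕ) (p : ℝ) (hp : 0 ≤ p)
    (hdeg : ∀ v, (G.neighborSet v).ncard ≤ Δ) (hc : Δ + 1 ≤ c)
    (f : V → Option (Fin c))
    (hproper : ∀ u v, G.Adj u v → (f u).isSome → f u ≠ f v)
    (h : ∀ v : V,
      (¬ ∃ t : Set V, G.IsClique t ∧ v ∈ t ∧ ((Δ : ℝ) + 1 - p / 2 ≤ t.ncard)) →
      ((G.neighborSet v).ncard : ℝ) - p ≤
        ({w ∈ G.neighborSet v | (f w).isSome ∧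
            ∀ u ∈ G.neighborSet v, u ≠ w → f u ≠ f w}.ncard : ℝ) -
        ({w ∈ G.neighborSet v | f w = none}.ncard : ℝ)) :
    ∃ g : V → Fin c, (∀ u v, G.Adj u v → g u ≠ g v) ∧
      ∀ v : V, ({w ∈ G.neighborSet v |
        ∃ u ∈ G.neighborSet v, u ≠ w ∧ g u = g w}.ncard : ℝ) ≤ p := by
  classical
  haveI : DecidableRel G.Adj := Classical.decRel _
  have hncard : ∀ v, (G.neighborSet v).ncard = G.degree v := by
    intro v
    have hset : G.neighborSet v = ↑(G.neighborFinset v) := by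
      ext x; simp [SimpleGraph.mem_neighborFinset]
    rw [congrArg Set.ncard hset, Set.ncard_coe_finset]
    rfl
  have hdeg' : ∀ v, G.degree v ≤ Δ := fun v => (hncard v) ▸ hdeg v
  obtain ⟨g, hg1, hg2⟩ := extend_aux G Δ c hdeg' hc _ f rfl hproper
  -- g agrees with f on coloured vertices
  have hext : ∀ w, (f w).isSome → f w = some (g w) := by
    intro w hw
    obtain ⟨a, ha⟩ := Option.isSome_iff_exists.mp hw
    rw [ha, hg2 w a ha]
  refine ⟨g, hg1, ?_⟩
  intro v
  set N := G.neighborFinset v with hN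
  set D := N.filter (fun w => ∃ u ∈ N, u ≠ w ∧ g u = g w) with hDdef
  have hDn : {w ∈ G.neighborSet v | ∃ u ∈ G.neighborSet v, u ≠ w ∧ g u = g w}.ncard
      = D.card := by
    rw [← Set.ncard_coe_finset]
    congr 1
    ext w
    simp only [Set.mem_setOf_eq, Finset.coe_filter, hDdef, hN,
      SimpleGraph.mem_neighborFinset, SimpleGraph.mem_neighborSet]
  rw [hDn]
  by_cases hclique : ∃ t : Set V, G.IsClique t ∧ v ∈ t ∧ ((Δ : ℝ) + 1 - p / 2 ≤ t.ncard)
  · -- big clique case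
    obtain ⟨t, htc, hvt, htcard⟩ := hclique
    have htfin : t.Finite := Set.toFinite t
    set Kf := htfin.toFinset.erase v with hKf
    have hKsub : Kf ⊆ N := by
      intro x hx
      obtain ⟨hxne, hxt⟩ := Finset.mem_erase.mp hx
      rw [Set.Finite.mem_toFinset] at hxt
      exact (G.mem_neighborFinset v x).mpr (htc hvt hxt (Ne.symm hxne))
    have hKcard : Kf.card + 1 = t.ncard := by
      rw [hKf, Finset.card_erase_of_mem (htfin.mem_toFinset.mpr hvt)]
      rw [Set.ncard_eq_toFinset_card t htfin]
      have : 1 ≤ htfin.toFinset.card :=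
        Finset.card_pos.mpr ⟨v, htfin.mem_toFinset.mpr hvt⟩
      omega
    have hKinj : Set.InjOn g Kf := by
      intro x hx y hy hxy
      by_contra hne
      obtain ⟨hxne, hxt⟩ := Finset.mem_erase.mp hx
      obtain ⟨hyne, hyt⟩ := Finset.mem_erase.mp hy
      rw [Set.Finite.mem_toFinset] at hxt hyt
      exact hg1 x y (htc hxt hyt hne) hxy
    have himg : Kf.card ≤ (N.image g).card := by
      calc Kf.card = (Kf.image g).card := (Finset.card_image_of_injOn hKinj).symm
        _ ≤ (N.image g).card := Finset.card_le_card (Finset.image_subset_image hKsub)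
    have hfb := fiber_bound N g
    rw [← hDdef] at hfb
    have hNd : N.card ≤ Δ := hdeg' v
    -- now real arithmetic
    have h1 : (D.card : ℝ) + 2 * (N.image g).card ≤ 2 * Δ := by
      have : (D.card : ℝ) + 2 * (N.image g).card ≤ 2 * N.card := by exact_mod_cast hfb
      have h2 : (N.card : ℝ) ≤ Δ := by exact_mod_cast hNd
      linarith
    have h2 : (Kf.card : ℝ) + 1 = t.ncard := by exact_mod_cast hKcard
    have h3 : (Kf.card : ℝ) ≤ (N.image g).card := by exact_mod_cast himg
    linarith
  · -- no big clique
    have hineq := h v hclique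
    set A := N.filter (fun w => (f w).isSome ∧ ∀ u ∈ N, u ≠ w → f u ≠ f w) with hAdef
    set B := N.filter (fun w => f w = none) with hBdef
    set U := N.filter (fun w => ∀ u ∈ N, u ≠ w → g u ≠ g w) with hUdef
    have hAn : {w ∈ G.neighborSet v | (f w).isSome ∧
        ∀ u ∈ G.neighborSet v, u ≠ w → f u ≠ f w}.ncard = A.card := by
      rw [← Set.ncard_coe_finset]
      congr 1
      ext w
      simp only [Set.mem_setOf_eq, Finset.coe_filter, hAdef, hN,
        SimpleGraph.mem_neighborFinset, SimpleGraph.mem_neighborSet]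
    have hBn : {w ∈ G.neighborSet v | f w = none}.ncard = B.card := by
      rw [← Set.ncard_coe_finset]
      congr 1
      ext w
      simp only [Set.mem_setOf_eq, Finset.coe_filter, hBdef, hN,
        SimpleGraph.mem_neighborFinset, SimpleGraph.mem_neighborSet]
    rw [hAn, hBn, hncard v] at hineq
    -- |D| + |U| = |N|
    have hU' : U = N.filter (fun w => ¬ ∃ u ∈ N, u ≠ w ∧ g u = g w) := by
      ext x
      simp only [hUdef, Finset.mem_filter, not_exists, not_and]
    have hDU : D.card + U.card = N.card := by
      rw [hDdef, hU']
      exact Finset.card_filter_add_card_filter_not _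
    -- injection from A \ U into B
    have hAU : (A \ U).card ≤ B.card := by
      apply Finset.card_le_card_of_injOn
        (fun w => if hw : ∃ u ∈ N, u ≠ w ∧ g u = g w then hw.choose else w)
      · intro w hw
        obtain ⟨hwA, hwnU⟩ := Finset.mem_sdiff.mp hw
        obtain ⟨hwN, hwsome, hwuniq⟩ := Finset.mem_filter.mp hwA
        have hex : ∃ u ∈ N, u ≠ w ∧ g u = g w := by
          by_contra hno
          exact hwnU (Finset.mem_filter.mpr ⟨hwN, by push_neg at hno; exact hno⟩)
        dsimp only; rw [dif_pos hex]
        obtain ⟨huN, hune, hgu⟩ := hex.choose_spec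
        refine Finset.mem_filter.mpr ⟨huN, ?_⟩
        by_contra hfu
        have husome : (f hex.choose).isSome := by
          cases hfu' : f hex.choose
          · exact absurd hfu' hfu
          · simp [hfu']
        have : f hex.choose = f w := by
          rw [hext _ husome, hext _ hwsome, hgu]
        exact hwuniq hex.choose huN hune this
      · intro w1 hw1 w2 hw2 heq
        simp only [Finset.coe_sdiff, Set.mem_diff, Finset.mem_coe] at hw1 hw2
        obtain ⟨hw1A, hw1nU⟩ := hw1
        obtain ⟨hw2A, hw2nU⟩ := hw2
        obtain ⟨hw1N, hw1some, hw1uniq⟩ := Finset.mem_filter.mp hw1A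
        obtain ⟨hw2N, hw2some, hw2uniq⟩ := Finset.mem_filter.mp hw2A
        have hex1 : ∃ u ∈ N, u ≠ w1 ∧ g u = g w1 := by
          by_contra hno
          exact hw1nU (Finset.mem_filter.mpr ⟨hw1N, by push_neg at hno; exact hno⟩)
        have hex2 : ∃ u ∈ N, u ≠ w2 ∧ g u = g w2 := by
          by_contra hno
          exact hw2nU (Finset.mem_filter.mpr ⟨hw2N, by push_neg at hno; exact hno⟩)
        simp only [dif_pos hex1, dif_pos hex2] at heq
        by_contra hne
        obtain ⟨hu1N, hu1ne, hgu1⟩ := hex1.choose_spec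
        obtain ⟨hu2N, hu2ne, hgu2⟩ := hex2.choose_spec
        have hgw : g w1 = g w2 := by rw [← hgu1, heq, hgu2]
        have : f w2 = f w1 := by
          rw [hext _ hw1some, hext _ hw2some, hgw]
        exact hw1uniq w2 hw2N (Ne.symm hne) this
    have hAcard : A.card ≤ U.card + B.card := by
      have h1 : (A ∩ U).card + (A \ U).card = A.card := Finset.card_inter_add_card_sdiff A U
      have h2 : (A ∩ U).card ≤ U.card := Finset.card_le_card (Finset.inter_subset_right)
      omega
    have hfinal : D.card + A.card ≤ N.card + B.card := by omega
    have hfinal' : (D.card : ℝ) + A.card ≤ N.card + B.card := by exact_mod_cast hfinal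
    rw [show G.degree v = N.card from rfl] at hineq
    linarith
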